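/- Let $g:\mathbb{N}\to\mathbb{R}$ be a nonnegative multiplicative function, and suppose there exist constants $A, B \geq 0$ and positive functions $h_1, h_2$ on $(1,\infty)$ with $h_1$ increasing, such that for all $x > 1$: (i) $\sum_{p \leq x} g(p)\log p \leq A x h_1(x)$, and (ii) $\sum_{p}\sum_{\alpha \geq 2} \frac{g(p^\alpha)}{p^\alpha}\log(p^\alpha) \leq B h_2(x)$. Then for all $x > 1$, $\sum_{n \leq x} g(n) \leq (A h_1(x) + B h_2(x) + 1) \frac{x}{\log x} \sum_{n \leq x} \frac{g(n)}{n}$. -/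

import Mathlib

open Finset
open scoped Classical

lemma gmul_log (g : ℕ → ℝ)
    (hgm : ∀ m n : ℕ, Nat.Coprime m n → g (m * n) = g m * g n) (n : ℕ) (hn : n ≠ 0) :
    g n * Real.log n =
      ∑ p ∈ n.primeFactors,
        g (p ^ n.factorization p) * Real.log ((p ^ n.factorization p : ℕ) : ℝ)
          * g (n / p ^ n.factorization p) := by
  have h0 : (n : ℝ) = ∏ p ∈ n.primeFactors, ((p ^ n.factorization p : ℕ) : ℝ) := by
    conv_lhs => rw [← Nat.factorization_prod_pow_eq_self hn]
    rw [Finsupp.prod, Nat.support_factorization]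
    push_cast
    rfl
  have hlog : Real.log n = ∑ p ∈ n.primeFactors, Real.log ((p ^ n.factorization p : ℕ) : ℝ) := by
    rw [h0, Real.log_prod]
    intro p hp
    have hp' : p.Prime := Nat.prime_of_mem_primeFactors hp
    have : 0 < p ^ n.factorization p := pow_pos hp'.pos _
    exact_mod_cast this.ne'
  rw [hlog, Finset.mul_sum]
  refine Finset.sum_congr rfl fun p hp => ?_
  have hp' : p.Prime := Nat.prime_of_mem_primeFactors hp
  have hcop : Nat.Coprime (p ^ n.factorization p) (n / p ^ n.factorization p) :=
    Nat.Coprime.pow_left _ (Nat.coprime_ordCompl hp' hn)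
  have := hgm _ _ hcop
  rw [Nat.ordProj_mul_ordCompl_eq_self] at this
  rw [this]; ring

lemma filt_mul_le (N q : ℕ) (hq : 0 < q) :
    (Finset.Icc 1 N).filter (fun m => q * m ≤ N) = Finset.Icc 1 (N / q) := by
  ext m
  simp only [Finset.mem_filter, Finset.mem_Icc]
  constructor
  · rintro ⟨⟨h1, h2⟩, h3⟩
    exact ⟨h1, (Nat.le_div_iff_mul_le hq).2 (by rwa [mul_comm])⟩
  · rintro ⟨h1, h2⟩
    have h3 := (Nat.le_div_iff_mul_le hq).1 h2
    have h4 : m ≤ m * q := Nat.le_mul_of_pos_right m hq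
    exact ⟨⟨h1, by omega⟩, by rwa [mul_comm]⟩

lemma step_p (g : ℕ → ℝ) (hg0 : ∀ n, 0 ≤ g n) (N p : ℕ) (hp : p.Prime) :
    ∑ n ∈ (Finset.Icc 1 N).filter (p ∣ ·),
        g (p ^ n.factorization p) * Real.log ((p ^ n.factorization p : ℕ) : ℝ)
          * g (n / p ^ n.factorization p)
      ≤ ∑ α ∈ Finset.Icc 1 N,
          g (p ^ α) * Real.log ((p ^ α : ℕ) : ℝ) * ∑ m ∈ Finset.Icc 1 (N / p ^ α), g m := by
  classical
  set F : ℕ × ℕ → ℝ := fun q =>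
    if p ^ q.1 * q.2 ≤ N then g (p ^ q.1) * Real.log ((p ^ q.1 : ℕ) : ℝ) * g q.2 else 0 with hF
  have hFnonneg : ∀ q : ℕ × ℕ, 0 ≤ F q := by
    intro q
    rw [hF]
    dsimp only
    split
    · have h1 : (1 : ℝ) ≤ ((p ^ q.1 : ℕ) : ℝ) := by
        exact_mod_cast Nat.one_le_iff_ne_zero.2 (pow_ne_zero _ hp.pos.ne')
      have := Real.log_nonneg h1
      have := hg0 (p ^ q.1); have := hg0 q.2
      positivity
    · exact le_refl 0
  have hRHS : ∑ q ∈ (Finset.Icc 1 N) ×ˢ (Finset.Icc 1 N), F q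
      = ∑ α ∈ Finset.Icc 1 N,
          g (p ^ α) * Real.log ((p ^ α : ℕ) : ℝ) * ∑ m ∈ Finset.Icc 1 (N / p ^ α), g m := by
    rw [Finset.sum_product]
    refine Finset.sum_congr rfl fun α hα => ?_
    rw [hF]
    simp only
    rw [← Finset.sum_filter, filt_mul_le N (p ^ α) (pow_pos hp.pos α), ← Finset.mul_sum]
  rw [← hRHS]
  set s := (Finset.Icc 1 N).filter (p ∣ ·) with hs
  set e : ℕ → ℕ × ℕ := fun n => (n.factorization p, n / p ^ n.factorization p) with he
  have hrecon : ∀ n ∈ s, p ^ n.factorization p * (n / p ^ n.factorization p) = n := fun n _ =>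
    Nat.ordProj_mul_ordCompl_eq_self n p
  have hinj : Set.InjOn e s := by
    intro a ha b hb hab
    have ha' := hrecon a ha
    have hb' := hrecon b hb
    rw [he] at hab
    simp only [Prod.mk.injEq] at hab
    obtain ⟨h1, h2⟩ := hab
    rw [← ha', ← hb', h2, h1]
  have hLHS : ∑ n ∈ s,
      g (p ^ n.factorization p) * Real.log ((p ^ n.factorization p : ℕ) : ℝ)
        * g (n / p ^ n.factorization p) = ∑ q ∈ s.image e, F q := by
    rw [Finset.sum_image (fun a ha b hb h => hinj ha hb h)]
    refine Finset.sum_congr rfl fun n hn => ?_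
    have hnN : n ≤ N := (Finset.mem_Icc.1 (Finset.mem_filter.1 hn).1).2
    have hcond : p ^ n.factorization p * (n / p ^ n.factorization p) ≤ N := by
      rw [hrecon n hn]; exact hnN
    rw [hF, he]
    simp only [if_pos hcond]
  rw [hLHS]
  refine Finset.sum_le_sum_of_subset_of_nonneg ?_ (fun q _ _ => hFnonneg q)
  intro q hq
  simp only [Finset.mem_image] at hq
  obtain ⟨n, hn, hqe⟩ := hq
  have hn1 : 1 ≤ n := (Finset.mem_Icc.1 (Finset.mem_filter.1 hn).1).1
  have hnN : n ≤ N := (Finset.mem_Icc.1 (Finset.mem_filter.1 hn).1).2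
  have hdvd : p ∣ n := (Finset.mem_filter.1 hn).2
  have hn0 : n ≠ 0 := by omega
  have hα1 : 1 ≤ n.factorization p := (hp.factorization_pos_of_dvd hn0 hdvd)
  have hproj : p ^ n.factorization p ≤ n :=
    Nat.le_of_dvd (by omega) (Nat.ordProj_dvd n p)
  have hαN : n.factorization p ≤ N := by
    have h1 : n.factorization p < p ^ n.factorization p := Nat.lt_pow_self hp.one_lt
    omega
  have hm1 : 1 ≤ n / p ^ n.factorization p := Nat.ordCompl_pos p hn0
  have hmN : n / p ^ n.factorization p ≤ N := le_trans (Nat.div_le_self _ _) hnN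
  rw [← hqe, he]
  simp only [Finset.mem_product, Finset.mem_Icc]
  exact ⟨⟨hα1, hαN⟩, hm1, hmN⟩

theorem stmt_0 (g : ℕ → ℝ) (hg0 : ∀ n, 0 ≤ g n) (hg1 : g 1 = 1)
    (hgm : ∀ m n : ℕ, Nat.Coprime m n → g (m * n) = g m * g n)
    (A B : ℝ) (hA : 0 ≤ A) (hB : 0 ≤ B) (h₁ h₂ : ℝ → ℝ)
    (hh₁pos : ∀ x : ℝ, 1 < x → 0 < h₁ x) (hh₂pos : ∀ x : ℝ, 1 < x → 0 < h₂ x)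
    (hh₁mono : MonotoneOn h₁ (Set.Ioi (1 : ℝ)))
    (hyp1 : ∀ x : ℝ, 1 < x →
      ∑ p ∈ (Finset.Icc 1 ⌊x⌋₊).filter Nat.Prime, g p * Real.log p ≤ A * x * h₁ x)
    (hsumm : Summable fun pa : ℕ × ℕ =>
      if pa.1.Prime ∧ 2 ≤ pa.2 then
        g (pa.1 ^ pa.2) / (pa.1 : ℝ) ^ pa.2 * Real.log ((pa.1 : ℝ) ^ pa.2) else 0)
    (hyp2 : ∀ x : ℝ, 1 < x →
      (∑' pa : ℕ × ℕ, if pa.1.Prime ∧ 2 ≤ pa.2 then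
        g (pa.1 ^ pa.2) / (pa.1 : ℝ) ^ pa.2 * Real.log ((pa.1 : ℝ) ^ pa.2) else 0)
        ≤ B * h₂ x) :
    ∀ x : ℝ, 1 < x →
      ∑ n ∈ Finset.Icc 1 ⌊x⌋₊, g n ≤
        (A * h₁ x + B * h₂ x + 1) * (x / Real.log x) *
          ∑ n ∈ Finset.Icc 1 ⌊x⌋₊, g n / n := by
  intro x hx
  have hx0 : (0 : ℝ) < x := lt_trans one_pos hx
  set N := ⌊x⌋₊ with hN
  have hN1 : 1 ≤ N := by
    rw [hN]
    exact Nat.floor_pos.2 hx.le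
  have hNx : (N : ℝ) ≤ x := Nat.floor_le hx0.le
  set P := (Finset.Icc 1 N).filter Nat.Prime with hP
  set D := ∑ n ∈ Finset.Icc 1 N, g n / (n : ℝ) with hD
  clear_value D
  have hD0 : 0 ≤ D := by
    rw [hD]
    refine Finset.sum_nonneg fun n hn => ?_
    have := hg0 n
    positivity
  set S := ∑ n ∈ Finset.Icc 1 N, g n with hS
  clear_value S
  have hlogx : 0 < Real.log x := Real.log_pos hx
  -- trivial facts about members of Icc 1 N
  have hmem : ∀ n ∈ Finset.Icc 1 N, 1 ≤ n ∧ n ≤ N := fun n hn => Finset.mem_Icc.1 hn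
  -- step M2 : ∑ g n log(x/n) ≤ x * D
  have hM2 : ∑ n ∈ Finset.Icc 1 N, g n * Real.log (x / n) ≤ x * D := by
    rw [hD, Finset.mul_sum]
    refine Finset.sum_le_sum fun n hn => ?_
    obtain ⟨h1, h2⟩ := hmem n hn
    have hn0 : (0 : ℝ) < (n : ℝ) := by exact_mod_cast h1
    have hpos : 0 < x / n := div_pos hx0 hn0
    have hlog : Real.log (x / n) ≤ x / n := le_trans (Real.log_le_sub_one_of_pos hpos) (by linarith)
    calc g n * Real.log (x / n) ≤ g n * (x / n) := mul_le_mul_of_nonneg_left hlog (hg0 n)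
      _ = x * (g n / n) := by ring
  -- step M3 : ∑ g n log n ≤ T
  set W : ℕ → ℕ → ℝ := fun p α =>
    g (p ^ α) * Real.log ((p ^ α : ℕ) : ℝ) * ∑ m ∈ Finset.Icc 1 (N / p ^ α), g m with hW
  have hM3 : ∑ n ∈ Finset.Icc 1 N, g n * Real.log n
      ≤ ∑ p ∈ P, ∑ α ∈ Finset.Icc 1 N, W p α := by
    have hstep1 : ∑ n ∈ Finset.Icc 1 N, g n * Real.log n
        = ∑ p ∈ P, ∑ n ∈ (Finset.Icc 1 N).filter (p ∣ ·),
            g (p ^ n.factorization p) * Real.log ((p ^ n.factorization p : ℕ) : ℝ)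
              * g (n / p ^ n.factorization p) := by
      have : ∀ n ∈ Finset.Icc 1 N, g n * Real.log n
          = ∑ p ∈ P, if p ∣ n then
              g (p ^ n.factorization p) * Real.log ((p ^ n.factorization p : ℕ) : ℝ)
                * g (n / p ^ n.factorization p) else 0 := by
        intro n hn
        obtain ⟨h1, h2⟩ := hmem n hn
        have hn0 : n ≠ 0 := by omega
        rw [gmul_log g hgm n hn0, ← Finset.sum_filter]
        refine (Finset.sum_congr ?_ fun _ _ => rfl)
        ext p
        simp only [hP, Finset.mem_filter, Finset.mem_Icc, Nat.mem_primeFactors]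
        constructor
        · rintro ⟨hp, hdvd, -⟩
          have hpn : p ≤ n := Nat.le_of_dvd (by omega) hdvd
          exact ⟨⟨⟨hp.one_lt.le.trans' (by norm_num), by omega⟩, hp⟩, hdvd⟩
        · rintro ⟨⟨-, hp⟩, hdvd⟩
          exact ⟨hp, hdvd, hn0⟩
      rw [Finset.sum_congr rfl this, Finset.sum_comm]
      refine Finset.sum_congr rfl fun p hp => ?_
      rw [← Finset.sum_filter]
    rw [hstep1]
    refine Finset.sum_le_sum fun p hp => ?_
    have hp' : p.Prime := (Finset.mem_filter.1 hp).2
    exact step_p g hg0 N p hp'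
  -- split the α-sum
  have hsplit : Finset.Icc 1 N = insert 1 (Finset.Icc 2 N) := by
    ext a
    simp only [Finset.mem_Icc, Finset.mem_insert]
    omega
  have hone : (1 : ℕ) ∉ Finset.Icc 2 N := by simp
  have hTsplit : ∑ p ∈ P, ∑ α ∈ Finset.Icc 1 N, W p α
      = (∑ p ∈ P, W p 1) + ∑ p ∈ P, ∑ α ∈ Finset.Icc 2 N, W p α := by
    rw [← Finset.sum_add_distrib]
    refine Finset.sum_congr rfl fun p hp => ?_
    rw [hsplit, Finset.sum_insert hone]
  -- step M5 : T₁ ≤ A * x * h₁ x * D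
  have hM5 : ∑ p ∈ P, W p 1 ≤ A * x * h₁ x * D := by
    have hrw : ∀ p ∈ P, W p 1
        = ∑ m ∈ Finset.Icc 1 N, if p * m ≤ N then g p * Real.log p * g m else 0 := by
      intro p hp
      have hp' : p.Prime := (Finset.mem_filter.1 hp).2
      rw [hW]
      simp only [pow_one]
      rw [Finset.mul_sum, ← filt_mul_le N p hp'.pos, Finset.sum_filter]
    rw [Finset.sum_congr rfl hrw, Finset.sum_comm]
    have hinner : ∀ m ∈ Finset.Icc 1 N,
        (∑ p ∈ P, if p * m ≤ N then g p * Real.log p * g m else 0)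
          ≤ g m * (A * (x / m) * h₁ x) := by
      intro m hm
      obtain ⟨h1, h2⟩ := hmem m hm
      have hm0 : 0 < m := h1
      have hmr : (0 : ℝ) < (m : ℝ) := by exact_mod_cast h1
      have hxm : (0 : ℝ) < x / m := div_pos hx0 hmr
      have hPfilt : P.filter (fun p => p * m ≤ N) = (Finset.Icc 1 (N / m)).filter Nat.Prime := by
        ext p
        simp only [hP, Finset.mem_filter, Finset.mem_Icc]
        constructor
        · rintro ⟨⟨⟨ha, hb⟩, hc⟩, hd⟩
          exact ⟨⟨ha, (Nat.le_div_iff_mul_le hm0).2 hd⟩, hc⟩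
        · rintro ⟨⟨ha, hb⟩, hc⟩
          have hd := (Nat.le_div_iff_mul_le hm0).1 hb
          have : p ≤ p * m := Nat.le_mul_of_pos_right p hm0
          exact ⟨⟨⟨ha, by omega⟩, hc⟩, hd⟩
      have hNm : N / m = ⌊x / (m : ℝ)⌋₊ := by rw [Nat.floor_div_natCast, hN]
      have hkey : ∑ p ∈ (Finset.Icc 1 (N / m)).filter Nat.Prime, g p * Real.log p
          ≤ A * (x / m) * h₁ x := by
        by_cases hc : 1 < x / m
        · have hmono := hh₁mono (Set.mem_Ioi.2 hc) (Set.mem_Ioi.2 hx)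
            (by rw [div_le_iff₀ hmr]
                nlinarith [show (1 : ℝ) ≤ (m : ℝ) from by exact_mod_cast h1])
          have := hyp1 (x / m) hc
          rw [← hNm] at this
          calc ∑ p ∈ (Finset.Icc 1 (N / m)).filter Nat.Prime, g p * Real.log p
              ≤ A * (x / m) * h₁ (x / m) := this
            _ ≤ A * (x / m) * h₁ x :=
                mul_le_mul_of_nonneg_left hmono (by positivity)
        · push_neg at hc
          have hfloor : N / m ≤ 1 := by
            rw [hNm]
            exact_mod_cast Nat.floor_le_one_of_le_one hc
          have hempty : (Finset.Icc 1 (N / m)).filter Nat.Prime = ∅ := by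
            refine Finset.filter_false_of_mem fun p hp => ?_
            obtain ⟨ha, hb⟩ := Finset.mem_Icc.1 hp
            intro hpprime
            have := hpprime.two_le
            omega
          rw [hempty, Finset.sum_empty]
          have := hh₁pos x hx
          positivity
      calc (∑ p ∈ P, if p * m ≤ N then g p * Real.log p * g m else 0)
          = ∑ p ∈ P.filter (fun p => p * m ≤ N), g p * Real.log p * g m :=
            (Finset.sum_filter _ _).symm
        _ = (∑ p ∈ (Finset.Icc 1 (N / m)).filter Nat.Prime, g p * Real.log p) * g m := by
            rw [hPfilt, Finset.sum_mul]
        _ ≤ (A * (x / m) * h₁ x) * g m := by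
            refine mul_le_mul_of_nonneg_right hkey (hg0 m)
        _ = g m * (A * (x / m) * h₁ x) := by ring
    calc ∑ m ∈ Finset.Icc 1 N, ∑ p ∈ P, (if p * m ≤ N then g p * Real.log p * g m else 0)
        ≤ ∑ m ∈ Finset.Icc 1 N, g m * (A * (x / m) * h₁ x) := Finset.sum_le_sum hinner
      _ = A * x * h₁ x * D := by
          rw [hD, Finset.mul_sum]
          refine Finset.sum_congr rfl fun m hm => ?_
          obtain ⟨h1, h2⟩ := hmem m hm
          have hmr : ((m : ℝ)) ≠ 0 := by positivity -- fix below
          field_simp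
  -- step M6 : T₂ ≤ B * h₂ x * (x * D)
  have hM6 : ∑ p ∈ P, ∑ α ∈ Finset.Icc 2 N, W p α ≤ B * h₂ x * (x * D) := by
    set f : ℕ × ℕ → ℝ := fun pa =>
      if pa.1.Prime ∧ 2 ≤ pa.2 then
        g (pa.1 ^ pa.2) / (pa.1 : ℝ) ^ pa.2 * Real.log ((pa.1 : ℝ) ^ pa.2) else 0 with hf
    have hfnonneg : ∀ pa : ℕ × ℕ, 0 ≤ f pa := by
      intro pa
      rw [hf]
      dsimp only
      split
      · rename_i hcond
        have hp := hcond.1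
        have h1 : (1 : ℝ) ≤ (pa.1 : ℝ) ^ pa.2 := one_le_pow₀ (by exact_mod_cast hp.one_lt.le)
        have hlog := Real.log_nonneg h1
        have := hg0 (pa.1 ^ pa.2)
        positivity
      · exact le_refl 0
    have hterm : ∀ p ∈ P, ∀ α ∈ Finset.Icc 2 N, W p α ≤ x * D * f (p, α) := by
      intro p hp α hα
      have hp' : p.Prime := (Finset.mem_filter.1 hp).2
      obtain ⟨hα2, hαN⟩ := Finset.mem_Icc.1 hα
      have hpα : (0 : ℝ) < (p : ℝ) ^ α := by
        have : (0 : ℝ) < (p : ℝ) := by exact_mod_cast hp'.pos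
        positivity
      have hinner : ∑ m ∈ Finset.Icc 1 (N / p ^ α), g m ≤ (x / (p : ℝ) ^ α) * D := by
        have hsub : ∑ m ∈ Finset.Icc 1 (N / p ^ α), g m
            ≤ ∑ m ∈ Finset.Icc 1 (N / p ^ α), (x / (p : ℝ) ^ α) * (g m / m) := by
          refine Finset.sum_le_sum fun m hm => ?_
          obtain ⟨h1, h2⟩ := Finset.mem_Icc.1 hm
          have hmr : (0 : ℝ) < (m : ℝ) := by exact_mod_cast h1
          have hmle : (m : ℝ) * (p : ℝ) ^ α ≤ x := by
            have := (Nat.le_div_iff_mul_le (pow_pos hp'.pos α)).1 h2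
            have hcast : ((m * p ^ α : ℕ) : ℝ) ≤ (N : ℝ) := by exact_mod_cast this
            push_cast at hcast
            linarith
          have hmx : (m : ℝ) ≤ x / (p : ℝ) ^ α := by
            rw [le_div_iff₀ hpα]; exact hmle
          calc g m = (m : ℝ) * (g m / m) := by field_simp
            _ ≤ (x / (p : ℝ) ^ α) * (g m / m) := by
                refine mul_le_mul_of_nonneg_right hmx ?_
                have := hg0 m
                positivity
        rw [← Finset.mul_sum] at hsub
        refine le_trans hsub ?_
        refine mul_le_mul_of_nonneg_left ?_ (by positivity)
        rw [hD]
        refine Finset.sum_le_sum_of_subset_of_nonneg ?_ (fun m hm _ => ?_)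
        · exact Finset.Icc_subset_Icc_right (Nat.div_le_self _ _)
        · have := hg0 m; positivity
      have hfval : f (p, α) = g (p ^ α) / (p : ℝ) ^ α * Real.log ((p : ℝ) ^ α) := by
        rw [hf]
        simp only [if_pos (⟨hp', hα2⟩ : p.Prime ∧ 2 ≤ α)]
      have hlogpos : 0 ≤ Real.log ((p : ℝ) ^ α) := by
        refine Real.log_nonneg (one_le_pow₀ (by exact_mod_cast hp'.one_lt.le))
      have hcast : ((p ^ α : ℕ) : ℝ) = (p : ℝ) ^ α := by push_cast; ring
      simp only [hW]
      rw [hfval, hcast]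
      calc g (p ^ α) * Real.log ((p : ℝ) ^ α) * ∑ m ∈ Finset.Icc 1 (N / p ^ α), g m
          ≤ g (p ^ α) * Real.log ((p : ℝ) ^ α) * ((x / (p : ℝ) ^ α) * D) := by
            refine mul_le_mul_of_nonneg_left hinner ?_
            have := hg0 (p ^ α)
            positivity
        _ = x * D * (g (p ^ α) / (p : ℝ) ^ α * Real.log ((p : ℝ) ^ α)) := by
            field_simp
    have hsum1 : ∑ p ∈ P, ∑ α ∈ Finset.Icc 2 N, W p α
        ≤ ∑ p ∈ P, ∑ α ∈ Finset.Icc 2 N, x * D * f (p, α) := by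
      refine Finset.sum_le_sum fun p hp => Finset.sum_le_sum fun α hα => hterm p hp α hα
    have hsum2 : ∑ p ∈ P, ∑ α ∈ Finset.Icc 2 N, x * D * f (p, α)
        = x * D * ∑ pa ∈ P ×ˢ Finset.Icc 2 N, f pa := by
      rw [Finset.sum_product, Finset.mul_sum]
      refine Finset.sum_congr rfl fun p hp => ?_
      rw [Finset.mul_sum]
    have hsum3 : ∑ pa ∈ P ×ˢ Finset.Icc 2 N, f pa ≤ B * h₂ x := by
      refine le_trans (Summable.sum_le_tsum _ (fun pa _ => hfnonneg pa) hsumm) (hyp2 x hx)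
    calc ∑ p ∈ P, ∑ α ∈ Finset.Icc 2 N, W p α
        ≤ x * D * ∑ pa ∈ P ×ˢ Finset.Icc 2 N, f pa := by rw [← hsum2]; exact hsum1
      _ ≤ x * D * (B * h₂ x) :=
          mul_le_mul_of_nonneg_left hsum3 (by positivity)
      _ = B * h₂ x * (x * D) := by ring
  -- combine
  have hM1 : S * Real.log x
      = (∑ n ∈ Finset.Icc 1 N, g n * Real.log (x / n)) + ∑ n ∈ Finset.Icc 1 N, g n * Real.log n := by
    rw [hS, Finset.sum_mul, ← Finset.sum_add_distrib]
    refine Finset.sum_congr rfl fun n hn => ?_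
    obtain ⟨h1, h2⟩ := hmem n hn
    have hn0 : ((n : ℝ)) ≠ 0 := by
      have : (0 : ℝ) < (n : ℝ) := by exact_mod_cast h1
      exact this.ne'
    rw [Real.log_div hx0.ne' hn0]
    ring
  have hfinal : S * Real.log x ≤ (A * h₁ x + B * h₂ x + 1) * x * D := by
    rw [hM1]
    have := hM3.trans (le_of_eq hTsplit)
    calc (∑ n ∈ Finset.Icc 1 N, g n * Real.log (x / n)) + ∑ n ∈ Finset.Icc 1 N, g n * Real.log n
        ≤ x * D + ((∑ p ∈ P, W p 1) + ∑ p ∈ P, ∑ α ∈ Finset.Icc 2 N, W p α) :=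
          add_le_add hM2 this
      _ ≤ x * D + (A * x * h₁ x * D + B * h₂ x * (x * D)) := by
          refine add_le_add_right (add_le_add hM5 hM6) _
      _ = (A * h₁ x + B * h₂ x + 1) * x * D := by ring
  rw [show (A * h₁ x + B * h₂ x + 1) * (x / Real.log x) * D
      = ((A * h₁ x + B * h₂ x + 1) * x * D) / Real.log x by field_simp; try ring]
  rw [le_div_iff₀ hlogx]
  exact hfinal
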